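/- Let A, BK ∈ ℝ^{n×n}, x(t) = e^{t(A−BK)}x₀, and for T > 0, 0 < ε, δ < 1 and c ≥ 0 define G₃(t) = (δ/(2ε)) ∫_0^t (A−BK)(x(π_δ(s)) − x(s)) ds and G₄(t) = (1/2)(δ/ε − c) ∫_0^t (A−BK) x(s) ds, with π_δ(s) = δ⌊s/δ⌋. If δ ≤ (c+1)ε, then sup_{0≤t≤T} |G₃(t)| ≤ (ε/2)(c+1)² |A−BK| e^{|A−BK|} |x₀| e^{|A−BK|T}, and sup_{0≤t≤T} |G₄(t)| ≤ (1/2)|δ/ε − c| · |x₀| · e^{|A−BK|T}. -/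

import Mathlib

set_option maxHeartbeats 1000000
set_option synthInstance.maxHeartbeats 400000


/- `ABK` denotes the matrix `A − BK` (a continuous linear endomorphism of
Euclidean space), `x(t) = e^{t(A−BK)} x₀`, `π_δ(s) = δ⌊s/δ⌋`, and
`G₃(t) = (δ/(2ε)) ∫_0^t (A−BK)(x(π_δ(s)) − x(s)) ds`,
`G₄(t) = (1/2)(δ/ε − c) ∫_0^t (A−BK) x(s) ds`. -/

noncomputable section

abbrev Euc (n : ℕ) := EuclideanSpace ℝ (Fin n)
abbrev Mat (n : ℕ) := Euc n →L[ℝ] Euc n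

lemma my_norm_pow_le {n : ℕ} (A : Mat n) (m : ℕ) : ‖A ^ m‖ ≤ ‖A‖ ^ m := by
  induction m with
  | zero =>
      rw [pow_zero, pow_zero]
      exact ContinuousLinearMap.norm_id_le
  | succ m ih =>
      rw [pow_succ, pow_succ]
      exact (norm_mul_le _ _).trans (mul_le_mul_of_nonneg_right ih (norm_nonneg A))

lemma my_norm_exp_le {n : ℕ} (A : Mat n) :
    ‖NormedSpace.exp A‖ ≤ Real.exp ‖A‖ := by
  have h1 : Real.exp ‖A‖ = ∑' m : ℕ, ‖A‖ ^ m / m.factorial := by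
    rw [Real.exp_eq_exp_ℝ, NormedSpace.exp_eq_tsum_div]
  rw [NormedSpace.exp_eq_tsum ℝ, h1]
  refine (norm_tsum_le_tsum_norm (NormedSpace.norm_expSeries_summable' A)).trans
    (Summable.tsum_le_tsum (fun m => ?_) (NormedSpace.norm_expSeries_summable' A)
      (Real.summable_pow_div_factorial ‖A‖))
  rw [norm_smul, norm_inv, Real.norm_natCast, div_eq_inv_mul]
  exact mul_le_mul_of_nonneg_left (my_norm_pow_le A m) (by positivity)

lemma my_hasDerivAt {n : ℕ} (A : Mat n) (x₀ : Euc n) (t : ℝ) :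
    HasDerivAt (fun u : ℝ => NormedSpace.exp (u • A) x₀)
      (A (NormedSpace.exp (t • A) x₀)) t := by
  have h := (hasDerivAt_exp_smul_const' (𝕂 := ℝ) A t).clm_apply (hasDerivAt_const t x₀)
  simpa using h

lemma my_cont {n : ℕ} (A : Mat n) (x₀ : Euc n) :
    Continuous fun u : ℝ => A (NormedSpace.exp (u • A) x₀) := by
  have h1 : Continuous fun u : ℝ => NormedSpace.exp (u • A) :=
    continuous_iff_continuousAt.2 fun t => (hasDerivAt_exp_smul_const' (𝕂 := ℝ) A t).continuousAt
  exact A.continuous.comp (h1.clm_apply continuous_const)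

/-- If `δ ≤ (c+1)ε` then
`sup_{0≤t≤T}|G₃(t)| ≤ (ε/2)(c+1)² ‖A−BK‖ e^{‖A−BK‖} ‖x₀‖ e^{‖A−BK‖T}` and
`sup_{0≤t≤T}|G₄(t)| ≤ (1/2)|δ/ε − c| ‖x₀‖ e^{‖A−BK‖T}`. -/
theorem G34_bounds {n : ℕ} (ABK : Mat n) (x₀ : Euc n) (T : ℝ) (hT : 0 < T)
    (ε δ : ℝ) (hε : ε ∈ Set.Ioo (0:ℝ) 1) (hδ : δ ∈ Set.Ioo (0:ℝ) 1)
    (c : ℝ) (hc : 0 ≤ c) (hδε : δ ≤ (c + 1) * ε) :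
    (⨆ t : Set.Icc (0:ℝ) T,
        ‖(δ / (2 * ε)) • ∫ s in (0:ℝ)..t.1,
            ABK (NormedSpace.exp ((δ * ↑⌊s / δ⌋) • ABK) x₀ -
              NormedSpace.exp (s • ABK) x₀)‖) ≤
      ε / 2 * (c + 1) ^ 2 * ‖ABK‖ * Real.exp ‖ABK‖ * ‖x₀‖ * Real.exp (‖ABK‖ * T) ∧
    (⨆ t : Set.Icc (0:ℝ) T,
        ‖((2:ℝ)⁻¹ * (δ / ε - c)) • ∫ s in (0:ℝ)..t.1,
            ABK (NormedSpace.exp (s • ABK) x₀)‖) ≤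
      1 / 2 * |δ / ε - c| * ‖x₀‖ * Real.exp (‖ABK‖ * T) := by
  haveI : Nonempty (Set.Icc (0:ℝ) T) := ⟨⟨0, le_refl 0, hT.le⟩⟩
  have hA1 : (0:ℝ) ≤ δ * ‖x₀‖ * ‖ABK‖ :=
    mul_nonneg (mul_nonneg hδ.1.le (norm_nonneg _)) (norm_nonneg _)
  have hA2 : (0:ℝ) ≤ δ / (2 * ε) := div_nonneg hδ.1.le (by linarith [hε.1])
  have hk0 : 0 ≤ ‖ABK‖ := norm_nonneg _
  -- pointwise bound for the basic integrand
  have hbx : ∀ s u : ℝ, 0 ≤ u → u ≤ s →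
      ‖ABK (NormedSpace.exp (u • ABK) x₀)‖ ≤ ‖ABK‖ * (Real.exp (‖ABK‖ * s) * ‖x₀‖) := by
    intro s u hu hus
    refine (ABK.le_opNorm _).trans ?_
    refine mul_le_mul_of_nonneg_left ?_ hk0
    refine ((NormedSpace.exp (u • ABK)).le_opNorm x₀).trans ?_
    refine mul_le_mul_of_nonneg_right ((my_norm_exp_le _).trans ?_) (norm_nonneg _)
    apply Real.exp_le_exp.mpr
    refine (norm_smul_le u ABK).trans ?_
    rw [Real.norm_eq_abs, abs_of_nonneg hu]
    calc u * ‖ABK‖ ≤ s * ‖ABK‖ := mul_le_mul_of_nonneg_right hus hk0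
      _ = ‖ABK‖ * s := mul_comm _ _
  -- FTC for the matrix exponential
  have hFTC : ∀ a b : ℝ, (∫ s in a..b, ABK (NormedSpace.exp (s • ABK) x₀))
      = NormedSpace.exp (b • ABK) x₀ - NormedSpace.exp (a • ABK) x₀ := by
    intro a b
    exact intervalIntegral.integral_eq_sub_of_hasDerivAt
      (fun u _ => my_hasDerivAt ABK x₀ u) ((my_cont ABK x₀).intervalIntegrable a b)
  -- scalar exponential integral
  have hF : ∀ u : ℝ, HasDerivAt (fun s : ℝ => Real.exp (‖ABK‖ * s))
      (‖ABK‖ * Real.exp (‖ABK‖ * u)) u := by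
    intro u
    have h1 : HasDerivAt (fun s : ℝ => ‖ABK‖ * s) ‖ABK‖ u := by
      simpa using (hasDerivAt_id u).const_mul ‖ABK‖
    have h2 := (Real.hasDerivAt_exp (‖ABK‖ * u)).comp u h1
    simpa [Function.comp_def, mul_comm (Real.exp (‖ABK‖ * u)) ‖ABK‖] using h2
  have hcontk : Continuous fun s : ℝ => ‖ABK‖ * Real.exp (‖ABK‖ * s) := by fun_prop
  have hInt : ∀ t : ℝ, (∫ s in (0:ℝ)..t, ‖ABK‖ * Real.exp (‖ABK‖ * s))
      = Real.exp (‖ABK‖ * t) - 1 := by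
    intro t
    have := intervalIntegral.integral_eq_sub_of_hasDerivAt
      (f := fun s : ℝ => Real.exp (‖ABK‖ * s)) (fun u _ => hF u)
      (hcontk.intervalIntegrable 0 t)
    simpa using this
  -- the step estimate
  have hstep : ∀ s : ℝ, 0 ≤ s →
      ‖NormedSpace.exp ((δ * ↑⌊s / δ⌋) • ABK) x₀ - NormedSpace.exp (s • ABK) x₀‖
        ≤ δ * (‖ABK‖ * (Real.exp (‖ABK‖ * s) * ‖x₀‖)) := by
    intro s hs0
    set p := δ * (⌊s / δ⌋ : ℝ) with hp
    have hδ0 := hδ.1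
    have hp0 : 0 ≤ p :=
      mul_nonneg hδ0.le (by exact_mod_cast Int.floor_nonneg.mpr (div_nonneg hs0 hδ0.le))
    have hps : p ≤ s := by
      have h1 : (⌊s / δ⌋ : ℝ) ≤ s / δ := Int.floor_le _
      calc p ≤ δ * (s / δ) := mul_le_mul_of_nonneg_left h1 hδ0.le
        _ = s := by field_simp
    have hsp : s - p ≤ δ := by
      have h2 : s / δ < (⌊s / δ⌋ : ℝ) + 1 := Int.lt_floor_add_one _
      have h3 : s < ((⌊s / δ⌋ : ℝ) + 1) * δ := by
        rwa [div_lt_iff₀ hδ0] at h2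
      nlinarith [h3]
    have heq : NormedSpace.exp (p • ABK) x₀ - NormedSpace.exp (s • ABK) x₀
        = -(∫ u in p..s, ABK (NormedSpace.exp (u • ABK) x₀)) := by
      rw [hFTC p s]; abel
    rw [heq, norm_neg]
    have hb : ∀ u ∈ Set.uIoc p s,
        ‖ABK (NormedSpace.exp (u • ABK) x₀)‖ ≤ ‖ABK‖ * (Real.exp (‖ABK‖ * s) * ‖x₀‖) := by
      intro u hu
      rw [Set.uIoc_of_le hps] at hu
      exact hbx s u (hp0.trans hu.1.le) hu.2
    calc ‖∫ u in p..s, ABK (NormedSpace.exp (u • ABK) x₀)‖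
        ≤ ‖ABK‖ * (Real.exp (‖ABK‖ * s) * ‖x₀‖) * |s - p| :=
          intervalIntegral.norm_integral_le_of_norm_le_const hb
      _ ≤ ‖ABK‖ * (Real.exp (‖ABK‖ * s) * ‖x₀‖) * δ := by
          refine mul_le_mul_of_nonneg_left ?_ (by positivity)
          rw [abs_of_nonneg (by linarith)]
          exact hsp
      _ = δ * (‖ABK‖ * (Real.exp (‖ABK‖ * s) * ‖x₀‖)) := by ring
  constructor
  · -- G₃ bound
    refine ciSup_le fun t => ?_
    obtain ⟨t, ht0, htT⟩ := t
    simp only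
    have hIb : ‖∫ s in (0:ℝ)..t,
        ABK (NormedSpace.exp ((δ * ↑⌊s / δ⌋) • ABK) x₀ -
          NormedSpace.exp (s • ABK) x₀)‖
        ≤ δ * ‖x₀‖ * ‖ABK‖ * (Real.exp (‖ABK‖ * t) - 1) := by
      have hg : IntervalIntegrable
          (fun s : ℝ => (δ * ‖x₀‖ * ‖ABK‖) * (‖ABK‖ * Real.exp (‖ABK‖ * s)))
          MeasureTheory.volume 0 t := (continuous_const.mul hcontk).intervalIntegrable 0 t
      have hbound : ∀ᵐ s ∂MeasureTheory.volume.restrict (Set.uIoc (0:ℝ) t),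
          ‖ABK (NormedSpace.exp ((δ * ↑⌊s / δ⌋) • ABK) x₀ -
            NormedSpace.exp (s • ABK) x₀)‖
          ≤ (δ * ‖x₀‖ * ‖ABK‖) * (‖ABK‖ * Real.exp (‖ABK‖ * s)) := by
        refine (MeasureTheory.ae_restrict_iff' measurableSet_uIoc).mpr
          (MeasureTheory.ae_of_all _ fun s hs => ?_)
        rw [Set.uIoc_of_le ht0] at hs
        calc ‖ABK (NormedSpace.exp ((δ * ↑⌊s / δ⌋) • ABK) x₀ -
              NormedSpace.exp (s • ABK) x₀)‖
            ≤ ‖ABK‖ * ‖NormedSpace.exp ((δ * ↑⌊s / δ⌋) • ABK) x₀ -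
                NormedSpace.exp (s • ABK) x₀‖ := ABK.le_opNorm _
          _ ≤ ‖ABK‖ * (δ * (‖ABK‖ * (Real.exp (‖ABK‖ * s) * ‖x₀‖))) :=
              mul_le_mul_of_nonneg_left (hstep s hs.1.le) hk0
          _ = (δ * ‖x₀‖ * ‖ABK‖) * (‖ABK‖ * Real.exp (‖ABK‖ * s)) := by ring
      have h1 : (0:ℝ) ≤ Real.exp (‖ABK‖ * t) - 1 := by
        have : (1:ℝ) ≤ Real.exp (‖ABK‖ * t) := Real.one_le_exp (by positivity)
        linarith
      calc ‖∫ s in (0:ℝ)..t,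
            ABK (NormedSpace.exp ((δ * ↑⌊s / δ⌋) • ABK) x₀ -
              NormedSpace.exp (s • ABK) x₀)‖
          ≤ |∫ s in (0:ℝ)..t, (δ * ‖x₀‖ * ‖ABK‖) * (‖ABK‖ * Real.exp (‖ABK‖ * s))| :=
            intervalIntegral.norm_integral_le_abs_of_norm_le hbound hg
        _ = δ * ‖x₀‖ * ‖ABK‖ * (Real.exp (‖ABK‖ * t) - 1) := by
            rw [intervalIntegral.integral_const_mul, hInt t,
              abs_of_nonneg (mul_nonneg hA1 h1)]
    rw [norm_smul, Real.norm_eq_abs, abs_of_nonneg hA2]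
    have hEt : Real.exp (‖ABK‖ * t) - 1 ≤ Real.exp (‖ABK‖ * T) := by
      have h1 : Real.exp (‖ABK‖ * t) ≤ Real.exp (‖ABK‖ * T) :=
        Real.exp_le_exp.mpr (mul_le_mul_of_nonneg_left htT hk0)
      linarith
    calc δ / (2 * ε) * ‖∫ s in (0:ℝ)..t,
          ABK (NormedSpace.exp ((δ * ↑⌊s / δ⌋) • ABK) x₀ -
            NormedSpace.exp (s • ABK) x₀)‖
        ≤ δ / (2 * ε) * (δ * ‖x₀‖ * ‖ABK‖ * Real.exp (‖ABK‖ * T)) := by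
          refine mul_le_mul_of_nonneg_left (hIb.trans ?_) hA2
          exact mul_le_mul_of_nonneg_left hEt hA1
      _ ≤ ε / 2 * (c + 1) ^ 2 * ‖ABK‖ * Real.exp ‖ABK‖ * ‖x₀‖ * Real.exp (‖ABK‖ * T) := by
          have h1 : (1:ℝ) ≤ Real.exp ‖ABK‖ := Real.one_le_exp hk0
          have h2 : δ * δ ≤ ((c + 1) * ε) * ((c + 1) * ε) :=
            mul_le_mul hδε hδε hδ.1.le (mul_nonneg (by linarith) hε.1.le)
          have hM : (0:ℝ) ≤ ‖x₀‖ * ‖ABK‖ * Real.exp (‖ABK‖ * T) := by positivity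
          have h3 : δ * δ * (‖x₀‖ * ‖ABK‖ * Real.exp (‖ABK‖ * T))
              ≤ ((c + 1) * ε) * ((c + 1) * ε) * (‖x₀‖ * ‖ABK‖ * Real.exp (‖ABK‖ * T)) :=
            mul_le_mul_of_nonneg_right h2 hM
          have h4 : ((c + 1) * ε) * ((c + 1) * ε) * (‖x₀‖ * ‖ABK‖ * Real.exp (‖ABK‖ * T))
              ≤ ((c + 1) * ε) * ((c + 1) * ε) * (‖x₀‖ * ‖ABK‖ * Real.exp (‖ABK‖ * T)) * Real.exp ‖ABK‖ :=
            le_mul_of_one_le_right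
              (mul_nonneg (mul_nonneg (mul_nonneg (by linarith) hε.1.le)
                (mul_nonneg (by linarith) hε.1.le)) hM) h1
          rw [div_mul_eq_mul_div, div_le_iff₀ (by linarith [hε.1] : (0:ℝ) < 2 * ε)]
          nlinarith [h3, h4]
  · -- G₄ bound
    refine ciSup_le fun t => ?_
    obtain ⟨t, ht0, htT⟩ := t
    simp only
    have hIb : ‖∫ s in (0:ℝ)..t, ABK (NormedSpace.exp (s • ABK) x₀)‖
        ≤ ‖x₀‖ * (Real.exp (‖ABK‖ * t) - 1) := by
      have hg : IntervalIntegrable (fun s : ℝ => ‖x₀‖ * (‖ABK‖ * Real.exp (‖ABK‖ * s)))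
          MeasureTheory.volume 0 t := (continuous_const.mul hcontk).intervalIntegrable 0 t
      have hbound : ∀ᵐ s ∂MeasureTheory.volume.restrict (Set.uIoc (0:ℝ) t),
          ‖ABK (NormedSpace.exp (s • ABK) x₀)‖ ≤ ‖x₀‖ * (‖ABK‖ * Real.exp (‖ABK‖ * s)) := by
        refine (MeasureTheory.ae_restrict_iff' measurableSet_uIoc).mpr
          (MeasureTheory.ae_of_all _ fun s hs => ?_)
        rw [Set.uIoc_of_le ht0] at hs
        calc ‖ABK (NormedSpace.exp (s • ABK) x₀)‖
            ≤ ‖ABK‖ * (Real.exp (‖ABK‖ * s) * ‖x₀‖) := hbx s s hs.1.le le_rfl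
          _ = ‖x₀‖ * (‖ABK‖ * Real.exp (‖ABK‖ * s)) := by ring
      calc ‖∫ s in (0:ℝ)..t, ABK (NormedSpace.exp (s • ABK) x₀)‖
          ≤ |∫ s in (0:ℝ)..t, ‖x₀‖ * (‖ABK‖ * Real.exp (‖ABK‖ * s))| :=
            intervalIntegral.norm_integral_le_abs_of_norm_le hbound hg
        _ = ‖x₀‖ * (Real.exp (‖ABK‖ * t) - 1) := by
            rw [intervalIntegral.integral_const_mul, hInt t]
            have h1 : (0:ℝ) ≤ Real.exp (‖ABK‖ * t) - 1 := by
              have : (1:ℝ) ≤ Real.exp (‖ABK‖ * t) := Real.one_le_exp (by positivity)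
              linarith
            rw [abs_of_nonneg (mul_nonneg (norm_nonneg _) h1)]
    rw [norm_smul, Real.norm_eq_abs, abs_mul, abs_of_nonneg (by norm_num : (0:ℝ) ≤ (2:ℝ)⁻¹)]
    have hEt : Real.exp (‖ABK‖ * t) - 1 ≤ Real.exp (‖ABK‖ * T) := by
      have h1 : Real.exp (‖ABK‖ * t) ≤ Real.exp (‖ABK‖ * T) :=
        Real.exp_le_exp.mpr (mul_le_mul_of_nonneg_left htT hk0)
      linarith
    calc (2:ℝ)⁻¹ * |δ / ε - c| * ‖∫ s in (0:ℝ)..t, ABK (NormedSpace.exp (s • ABK) x₀)‖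
        ≤ (2:ℝ)⁻¹ * |δ / ε - c| * (‖x₀‖ * Real.exp (‖ABK‖ * T)) := by
          refine mul_le_mul_of_nonneg_left (hIb.trans ?_) (by positivity)
          exact mul_le_mul_of_nonneg_left hEt (norm_nonneg _)
      _ = 1 / 2 * |δ / ε - c| * ‖x₀‖ * Real.exp (‖ABK‖ * T) := by ring
end
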